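/- Let f : R^n → (−∞,∞] be proper lsc and prox-bounded with threshold λ_f, g : R^n → R with L-Lipschitz gradient, 0 < λ < min{1/(4L), λ_f}, and inf(f+g) > −∞. Let (x_k) be generated by the FRB scheme: y_k = x_k + λ(∇g(x_{k−1}) − ∇g(x_k)), x_{k+1} ∈ Prox_{λf}(y_k − λ∇g(x_k)). Set z_k = (x_{k+1}, x_k) and H(x,y) = f(x) + g(x) + (1/(4λ))‖x−y‖². Then for all k ≥ 0, (1/(4λ) − L)‖z_k − z_{k−1}‖² ≤ H(z_{k−1}) − H(z_k). -/

import Mathlib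

open Filter Topology

variable {H : Type*} [NormedAddCommGroup H] [InnerProductSpace ℝ H]

/-- `v` is a Fréchet subgradient of `f` at `x`. -/
def FSubd (f : H → EReal) (x v : H) : Prop :=
  f x ≠ ⊤ ∧ ∀ ε : ℝ, 0 < ε → ∃ δ : ℝ, 0 < δ ∧ ∀ y : H, ‖y - x‖ < δ →
    f x + (((inner ℝ v (y - x) : ℝ) - ε * ‖y - x‖ : ℝ) : EReal) ≤ f y

/-- `v` is a limiting (Mordukhovich) subgradient of `f` at `x`. -/
def LSubd (f : H → EReal) (x v : H) : Prop :=
  ∃ xs vs : ℕ → H,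
    Tendsto xs atTop (nhds x) ∧
    Tendsto (fun k => f (xs k)) atTop (nhds (f x)) ∧
    (∀ k, FSubd f (xs k) (vs k)) ∧
    Tendsto vs atTop (nhds v)

/-- `f` is proper: never `⊥` and finite somewhere. -/
def ProperFn (f : H → EReal) : Prop :=
  (∀ x, f x ≠ ⊥) ∧ ∃ x, f x ≠ ⊤

/-- The proximal mapping: set of minimizers of `u ↦ f u + (1/(2λ))‖x - u‖²`. -/
def Prox (lam : ℝ) (f : H → EReal) (x : H) : Set H :=
  {y | ∀ u : H, f y + ((1 / (2 * lam) * ‖x - y‖ ^ 2 : ℝ) : EReal)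
      ≤ f u + ((1 / (2 * lam) * ‖x - u‖ ^ 2 : ℝ) : EReal)}

/-- `f` is prox-bounded with threshold (at least) `lf`. -/
def ProxBddWith (f : H → EReal) (lf : ℝ) : Prop :=
  ∀ lam : ℝ, 0 < lam → lam < lf →
    ∃ b : ℝ, ∀ y : H, (b : EReal) ≤ f y + ((1 / (2 * lam) * ‖y‖ ^ 2 : ℝ) : EReal)


open intervalIntegral in
lemma descent_lemma {F : Type*} [NormedAddCommGroup F] [InnerProductSpace ℝ F] [CompleteSpace F]
    (g : F → ℝ) (g' : F → F) (hdiff : ∀ x, HasGradientAt g (g' x) x)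
    (L : ℝ) (hL : 0 ≤ L) (hlip : ∀ x y, ‖g' x - g' y‖ ≤ L * ‖x - y‖) (a b : F) :
    g b ≤ g a + inner ℝ (g' a) (b - a) + L / 2 * ‖b - a‖ ^ 2 := by
  have hg'cont : Continuous g' := by
    have : LipschitzWith (Real.toNNReal L) g' := by
      apply LipschitzWith.of_dist_le_mul
      intro x y
      rw [dist_eq_norm, dist_eq_norm, Real.coe_toNNReal _ hL]
      exact hlip x y
    exact this.continuous
  set c : ℝ → F := fun t => a + t • (b - a) with hc
  have hccont : Continuous c := by continuity
  have hcderiv : ∀ t : ℝ, HasDerivAt c (b - a) t := fun t => by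
    simpa only [one_smul] using ((hasDerivAt_id' t).smul_const (b - a)).const_add a
  set φ' : ℝ → ℝ := fun t => inner ℝ (g' (c t)) (b - a) with hφ'
  have hφ : ∀ t : ℝ, HasDerivAt (fun t => g (c t)) (φ' t) t := fun t => by
    have h1 := (hdiff (c t)).hasFDerivAt.comp_hasDerivAt t (hcderiv t)
    simp [φ'] at h1
    exact h1
  have hφ'cont : Continuous φ' := Continuous.inner (hg'cont.comp hccont) continuous_const
  have key : g b - g a = ∫ t in (0:ℝ)..1, φ' t := by
    have h := intervalIntegral.integral_eq_sub_of_hasDerivAt (f := fun t => g (c t))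
      (fun t _ => hφ t) (hφ'cont.intervalIntegrable 0 1)
    simp only [hc] at h
    rw [h]
    norm_num
  have bound : ∀ t ∈ Set.Icc (0:ℝ) 1,
      φ' t ≤ inner ℝ (g' a) (b - a) + (L * ‖b - a‖ ^ 2) * t := by
    intro t ht
    have h1 : φ' t - inner ℝ (g' a) (b - a) = inner ℝ (g' (c t) - g' a) (b - a) := by
      rw [inner_sub_left]
    have h2 : inner ℝ (g' (c t) - g' a) (b - a) ≤ ‖g' (c t) - g' a‖ * ‖b - a‖ :=
      real_inner_le_norm _ _
    have h3 : ‖g' (c t) - g' a‖ ≤ L * ‖c t - a‖ := hlip _ _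
    have h4 : ‖c t - a‖ = t * ‖b - a‖ := by
      have : c t - a = t • (b - a) := by simp [hc]
      rw [this, norm_smul, Real.norm_eq_abs, abs_of_nonneg ht.1]
    have h5 : ‖g' (c t) - g' a‖ * ‖b - a‖ ≤ L * (t * ‖b - a‖) * ‖b - a‖ :=
      mul_le_mul_of_nonneg_right (h4 ▸ h3) (norm_nonneg (b - a))
    nlinarith [h1, h2, h5]
  have hint : (∫ t in (0:ℝ)..1, φ' t) ≤
      ∫ t in (0:ℝ)..1, (inner ℝ (g' a) (b - a) + (L * ‖b - a‖ ^ 2) * t) := by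
    apply intervalIntegral.integral_mono_on (by norm_num)
      (hφ'cont.intervalIntegrable 0 1)
      ((continuous_const.add (continuous_const.mul continuous_id')).intervalIntegrable 0 1)
    intro t ht
    exact bound t ht
  have hval : (∫ t in (0:ℝ)..1, (inner ℝ (g' a) (b - a) + (L * ‖b - a‖ ^ 2) * t))
      = inner ℝ (g' a) (b - a) + L / 2 * ‖b - a‖ ^ 2 := by
    rw [intervalIntegral.integral_add (g := fun t : ℝ => L * ‖b - a‖ ^ 2 * t) (intervalIntegrable_const)
      ((continuous_const.mul continuous_id').intervalIntegrable 0 1),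
      intervalIntegral.integral_const, intervalIntegral.integral_const_mul,
      integral_id]
    norm_num
    ring
  linarith [key ▸ hint.trans_eq hval]


noncomputable section

variable {n : ℕ}

theorem frb_merit_descent
    (f : EuclideanSpace ℝ (Fin n) → EReal)
    (hproper : ProperFn f) (hlsc : LowerSemicontinuous f)
    (lf : ℝ) (hlf : 0 < lf) (hpb : ProxBddWith f lf)
    (g : EuclideanSpace ℝ (Fin n) → ℝ)
    (g' : EuclideanSpace ℝ (Fin n) → EuclideanSpace ℝ (Fin n))
    (hdiff : ∀ x, HasGradientAt g (g' x) x)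
    (L : ℝ) (hL : 0 < L) (hlip : ∀ x y, ‖g' x - g' y‖ ≤ L * ‖x - y‖)
    (lam : ℝ) (hlam0 : 0 < lam) (hlam1 : lam < 1 / (4 * L)) (hlam2 : lam < lf)
    (hinf : ∃ b : ℝ, ∀ x, (b : EReal) ≤ f x + (g x : EReal))
    (x : ℕ → EuclideanSpace ℝ (Fin n))
    (hscheme : ∀ k : ℕ, 1 ≤ k →
      x (k + 1) ∈ Prox lam f
        (x k + lam • (g' (x (k - 1)) - g' (x k)) - lam • g' (x k)))
    (z : ℕ → WithLp 2 (EuclideanSpace ℝ (Fin n) × EuclideanSpace ℝ (Fin n)))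
    (hz : ∀ k, z k = (WithLp.equiv 2 _).symm (x (k + 1), x k))
    (Hf : WithLp 2 (EuclideanSpace ℝ (Fin n) × EuclideanSpace ℝ (Fin n)) → EReal)
    (hH : ∀ p, Hf p =
      f ((WithLp.equiv 2 _ p).1) +
        ((g ((WithLp.equiv 2 _ p).1) +
          1 / (4 * lam) * ‖(WithLp.equiv 2 _ p).1 - (WithLp.equiv 2 _ p).2‖ ^ 2 : ℝ) : EReal)) :
    ∀ k : ℕ, 1 ≤ k →
      Hf (z k) + (((1 / (4 * lam) - L) * ‖z k - z (k - 1)‖ ^ 2 : ℝ) : EReal)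
        ≤ Hf (z (k - 1)) := by
  intro k hk
  obtain ⟨m, rfl⟩ : ∃ m, k = m + 1 := ⟨k - 1, by omega⟩
  simp only [Nat.add_sub_cancel]
  have hprox := hscheme (m + 1) (Nat.le_add_left 1 m)
  simp only [Nat.add_sub_cancel] at hprox
  set a := x m with ha
  set b := x (m + 1) with hb
  set c := x (m + 1 + 1) with hcdef
  -- finiteness of f c
  have hct : f c ≠ ⊤ := by
    obtain ⟨u0, hu0⟩ := hproper.2
    intro hT
    have h := hprox u0
    rw [hT] at h
    have hne : f u0 + ((1 / (2 * lam) * ‖b + lam • (g' a - g' b) - lam • g' b - u0‖ ^ 2 : ℝ) : EReal) < ⊤ :=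
      EReal.add_lt_top hu0 (EReal.coe_ne_top _)
    rw [EReal.top_add_of_ne_bot (EReal.coe_ne_bot _)] at h
    exact absurd (top_le_iff.mp h) hne.ne
  by_cases hbt : f b = ⊤
  · have htop : Hf (z m) = ⊤ := by
      rw [hH, hz]
      simp only [Equiv.apply_symm_apply]
      rw [← hb, hbt, EReal.top_add_of_ne_bot (EReal.coe_ne_bot _)]
    rw [htop]
    exact le_top
  set rc := (f c).toReal with hrc
  have hcr : f c = (rc : EReal) := (EReal.coe_toReal hct (hproper.1 c)).symm
  set rb := (f b).toReal with hrb
  have hbr : f b = (rb : EReal) := (EReal.coe_toReal hbt (hproper.1 b)).symm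
  -- real prox inequality
  have hpr : rc + 1 / (2 * lam) * ‖b + lam • (g' a - g' b) - lam • g' b - c‖ ^ 2
      ≤ rb + 1 / (2 * lam) * ‖b + lam • (g' a - g' b) - lam • g' b - b‖ ^ 2 := by
    have h := hprox b
    rw [hcr, hbr] at h
    exact_mod_cast h
  -- vector algebra
  set I1 : ℝ := inner ℝ (g' a - g' b) (c - b) with hI1
  set I2 : ℝ := inner ℝ (g' b) (c - b) with hI2
  set w := lam • (g' a - g' b) - lam • g' b with hw
  have e1 : b + lam • (g' a - g' b) - lam • g' b - c = w - (c - b) := by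
    rw [hw]; abel
  have e2 : b + lam • (g' a - g' b) - lam • g' b - b = w := by
    rw [hw]; abel
  have hwin : inner ℝ w (c - b) = lam * I1 - lam * I2 := by
    rw [hw, hI1, hI2, inner_sub_left, real_inner_smul_left, real_inner_smul_left]
  have hexp : ‖b + lam • (g' a - g' b) - lam • g' b - c‖ ^ 2
      = ‖w‖ ^ 2 - 2 * (lam * I1 - lam * I2) + ‖c - b‖ ^ 2 := by
    rw [e1, norm_sub_sq_real, hwin]
  rw [hexp, e2] at hpr
  have hpr2 : rc + 1 / (2 * lam) * ‖c - b‖ ^ 2 ≤ rb + I1 - I2 := by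
    have hcoef : 1 / (2 * lam) * (‖w‖ ^ 2 - 2 * (lam * I1 - lam * I2) + ‖c - b‖ ^ 2)
        = 1 / (2 * lam) * ‖w‖ ^ 2 + 1 / (2 * lam) * ‖c - b‖ ^ 2 - (I1 - I2) := by
      field_simp
      ring
    rw [hcoef] at hpr
    linarith
  -- descent lemma
  have hdesc : g c ≤ g b + I2 + L / 2 * ‖c - b‖ ^ 2 := by
    have := descent_lemma g g' hdiff L hL.le hlip b c
    rw [hI2]; linarith [this]
  -- Cauchy-Schwarz + Lipschitz
  have hCS : I1 ≤ L / 2 * (‖b - a‖ ^ 2 + ‖c - b‖ ^ 2) := by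
    have h1 : I1 ≤ ‖g' a - g' b‖ * ‖c - b‖ := real_inner_le_norm _ _
    have h2 : ‖g' a - g' b‖ * ‖c - b‖ ≤ (L * ‖a - b‖) * ‖c - b‖ :=
      mul_le_mul_of_nonneg_right (hlip a b) (norm_nonneg _)
    have h3 : ‖a - b‖ = ‖b - a‖ := norm_sub_rev a b
    rw [h3] at h2
    nlinarith [mul_nonneg hL.le (sq_nonneg (‖b - a‖ - ‖c - b‖)), h1, h2]
  -- norm splitting
  have hnorm : ‖z (m + 1) - z m‖ ^ 2 = ‖c - b‖ ^ 2 + ‖b - a‖ ^ 2 := by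
    rw [hz, hz, WithLp.prod_norm_sq_eq_of_L2]
    rfl
  -- reduce goal to reals
  rw [hnorm, hH, hH, hz, hz]
  simp only [Equiv.apply_symm_apply]
  rw [← ha, ← hb, ← hcdef, hcr, hbr]
  have h2lam : (1:ℝ) / (2 * lam) = 2 * (1 / (4 * lam)) := by
    field_simp
    ring
  have hLN0 : (0:ℝ) ≤ L * ‖b - a‖ ^ 2 := mul_nonneg hL.le (sq_nonneg _)
  rw [h2lam] at hpr2
  norm_cast
  linarith
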